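/- If R is Noetherian, then any submodule M of R^n contains a unique maximal (A,B)-invariant submodule M*, i.e., an (A,B)-invariant submodule of M containing every (A,B)-invariant submodule of M. -/

import Mathlib

open Matrix

variable {R : Type*} [CommRing R] {n m : ℕ}

/-- `U` is `(A,B)`-invariant: `A·U ⊆ U + im B`. -/
def ABInvariant (A : Matrix (Fin n) (Fin n) R) (B : Matrix (Fin n) (Fin m) R)
    (U : Submodule R (Fin n → R)) : Prop :=
  ∀ x ∈ U, A.mulVec x ∈ U ⊔ LinearMap.range B.mulVecLin

/-- `x` is reached from `0` at time `r` by a trajectory staying in `U`. -/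
def ABReached (A : Matrix (Fin n) (Fin n) R) (B : Matrix (Fin n) (Fin m) R)
    (U : Submodule R (Fin n → R)) (x : Fin n → R) (r : ℕ) : Prop :=
  ∃ (u : ℕ → Fin m → R) (xs : ℕ → Fin n → R),
    xs 0 = 0 ∧ (∀ k, xs (k + 1) = A.mulVec (xs k) + B.mulVec (u k)) ∧
    (∀ k, 1 ≤ k → k ≤ r → xs k ∈ U) ∧ xs r = x

/-- `U` is a reachability submodule. -/
def ABReachability (A : Matrix (Fin n) (Fin n) R) (B : Matrix (Fin n) (Fin m) R)
    (U : Submodule R (Fin n → R)) : Prop :=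
  ABInvariant A B U ∧ ∀ x ∈ U, ∃ r, ABReached A B U x r


lemma iSup_ABInvariant (A : Matrix (Fin n) (Fin n) R) (B : Matrix (Fin n) (Fin m) R)
    (M : Submodule R (Fin n → R)) :
    ABInvariant A B (⨆ U : {U : Submodule R (Fin n → R) // ABInvariant A B U ∧ U ≤ M},
      (U : Submodule R (Fin n → R))) := by
  intro x hx
  refine Submodule.iSup_induction
    (fun U : {U : Submodule R (Fin n → R) // ABInvariant A B U ∧ U ≤ M} =>
      (U : Submodule R (Fin n → R)))
    (motive := fun y => A.mulVec y ∈
      (⨆ U : {U : Submodule R (Fin n → R) // ABInvariant A B U ∧ U ≤ M},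
        (U : Submodule R (Fin n → R))) ⊔ LinearMap.range B.mulVecLin) hx ?_ ?_ ?_
  · intro U y hy
    refine SetLike.le_def.mp (sup_le_sup_right
      (le_iSup (fun U : {U : Submodule R (Fin n → R) // ABInvariant A B U ∧ U ≤ M} =>
        (U : Submodule R (Fin n → R))) U) (LinearMap.range B.mulVecLin)) (U.2.1 y hy)
  · simp
  · intro y z hy hz
    rw [Matrix.mulVec_add]
    exact Submodule.add_mem _ hy hz

theorem stmt_3 [IsNoetherianRing R] (A : Matrix (Fin n) (Fin n) R)
    (B : Matrix (Fin n) (Fin m) R) (M : Submodule R (Fin n → R)) :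
    ∃! Mstar : Submodule R (Fin n → R),
      ABInvariant A B Mstar ∧ Mstar ≤ M ∧
      ∀ U : Submodule R (Fin n → R), ABInvariant A B U → U ≤ M → U ≤ Mstar := by
  refine ⟨⨆ U : {U : Submodule R (Fin n → R) // ABInvariant A B U ∧ U ≤ M},
    (U : Submodule R (Fin n → R)), ⟨iSup_ABInvariant A B M, iSup_le fun U => U.2.2,
      fun U hU hUM => le_iSup
        (fun U : {U : Submodule R (Fin n → R) // ABInvariant A B U ∧ U ≤ M} =>
          (U : Submodule R (Fin n → R))) ⟨U, hU, hUM⟩⟩, ?_⟩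
  rintro V ⟨hVinv, hVM, hVmax⟩
  refine le_antisymm ?_ ?_
  · exact le_iSup (fun U : {U : Submodule R (Fin n → R) // ABInvariant A B U ∧ U ≤ M} =>
      (U : Submodule R (Fin n → R))) ⟨V, hVinv, hVM⟩
  · exact hVmax _ (iSup_ABInvariant A B M) (iSup_le fun U => U.2.2)
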